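/- Let n ≥ 2. The maps x ↦ y(x) and y ↦ x(y) are mutually inverse birational maps: for every x = (x_2,…,x_{2n−1}) ∈ (ℂ^×)^{2n−2} with T_k(x) ≠ 0 for 1 ≤ k ≤ n−1 and U_k(y(x)) ≠ 0 for 1 ≤ k ≤ n−1, one has x(y(x)) = x; and for every y = (y_1,…,y_{2n−2}) ∈ (ℂ^×)^{2n−2} with U_k(y) ≠ 0 for 1 ≤ k ≤ n−1 and T_k(x(y)) ≠ 0 for 1 ≤ k ≤ n−1, one has y(x(y)) = y. -/

import Mathlib

noncomputable section

/-- `Tf n x k = ∑_{j=k+1}^{n} x_j / x_{n+j-1}` (so `Tf n x n = 0`). -/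
def Tf (n : ℕ) (x : ℕ → ℂ) (k : ℕ) : ℂ :=
  ∑ j ∈ Finset.Icc (k + 1) n, x j / x (n + j - 1)

/-- `Uf n y k = y_1/y_n + ∑_{j=2}^{k} y_j / y_{n+j-1}` (so `Uf n y 1 = y_1/y_n`). -/
def Uf (n : ℕ) (y : ℕ → ℂ) (k : ℕ) : ℂ :=
  y 1 / y n + ∑ j ∈ Finset.Icc 2 k, y j / y (n + j - 1)

/-- The map `x ↦ y(x)`. -/
def yOf (n : ℕ) (x : ℕ → ℂ) (k : ℕ) : ℂ :=
  if k = 1 then (Tf n x 1)⁻¹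
  else if k ≤ n - 1 then x k * (Tf n x k)⁻¹
  else if k = n then (x n)⁻¹
  else (x k / x n) * Tf n x (k - n)

/-- The map `y ↦ x(y)`:
`x_k = (y_k/y_n)·U_k(y)⁻¹` for `2 ≤ k ≤ n-1`, `x_n = y_n⁻¹`,
`x_{n+l} = y_{n+l}·U_l(y)` for `1 ≤ l ≤ n-2`, `x_{2n-1} = U_{n-1}(y)`. -/
def xOf (n : ℕ) (y : ℕ → ℂ) (k : ℕ) : ℂ :=
  if k ≤ n - 1 then (y k / y n) * (Uf n y k)⁻¹
  else if k = n then (y n)⁻¹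
  else if k = 2 * n - 1 then Uf n y (n - 1)
  else y k * Uf n y (k - n)

lemma yOf_one (n : ℕ) (x : ℕ → ℂ) : yOf n x 1 = (Tf n x 1)⁻¹ := if_pos rfl

lemma yOf_mid {n k : ℕ} (x : ℕ → ℂ) (h1 : 2 ≤ k) (h2 : k ≤ n - 1) :
    yOf n x k = x k * (Tf n x k)⁻¹ := by
  unfold yOf; rw [if_neg (by omega), if_pos h2]

lemma yOf_n {n : ℕ} (x : ℕ → ℂ) (hn : 2 ≤ n) : yOf n x n = (x n)⁻¹ := by
  unfold yOf; rw [if_neg (by omega), if_neg (by omega), if_pos rfl]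

lemma yOf_hi {n k : ℕ} (x : ℕ → ℂ) (hn : 2 ≤ n) (h1 : n + 1 ≤ k) :
    yOf n x k = (x k / x n) * Tf n x (k - n) := by
  unfold yOf; rw [if_neg (by omega), if_neg (by omega), if_neg (by omega)]

lemma xOf_lo {n k : ℕ} (y : ℕ → ℂ) (h2 : k ≤ n - 1) :
    xOf n y k = (y k / y n) * (Uf n y k)⁻¹ := if_pos h2

lemma xOf_n {n : ℕ} (y : ℕ → ℂ) (hn : 2 ≤ n) : xOf n y n = (y n)⁻¹ := by
  unfold xOf; rw [if_neg (by omega), if_pos rfl]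

lemma xOf_top {n : ℕ} (y : ℕ → ℂ) (hn : 2 ≤ n) : xOf n y (2 * n - 1) = Uf n y (n - 1) := by
  unfold xOf; rw [if_neg (by omega), if_neg (by omega), if_pos rfl]

lemma xOf_hi {n k : ℕ} (y : ℕ → ℂ) (hn : 2 ≤ n) (h1 : n + 1 ≤ k) (h2 : k ≤ 2 * n - 2) :
    xOf n y k = y k * Uf n y (k - n) := by
  unfold xOf; rw [if_neg (by omega), if_neg (by omega), if_neg (by omega)]

lemma Tf_succ {n k : ℕ} (x : ℕ → ℂ) (h : k + 1 ≤ n) :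
    Tf n x k = x (k + 1) / x (n + k) + Tf n x (k + 1) := by
  unfold Tf
  rw [show Finset.Icc (k + 1) n = insert (k + 1) (Finset.Icc (k + 2) n) by
    ext j; simp; omega]
  rw [Finset.sum_insert (by simp), show n + (k + 1) - 1 = n + k by omega,
    show k + 1 + 1 = k + 2 by omega]

lemma Uf_succ {n k : ℕ} (y : ℕ → ℂ) (h : 1 ≤ k) :
    Uf n y (k + 1) = Uf n y k + y (k + 1) / y (n + k) := by
  unfold Uf
  rw [Finset.sum_Icc_succ_top (by omega), ← add_assoc,
    show n + (k + 1) - 1 = n + k by omega]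

lemma Tf_top {n : ℕ} (x : ℕ → ℂ) (hn : 2 ≤ n) :
    Tf n x (n - 1) = x n / x (2 * n - 1) := by
  unfold Tf
  rw [show n - 1 + 1 = n by omega, Finset.Icc_self, Finset.sum_singleton]
  congr 2
  omega

lemma Uf_one (n : ℕ) (y : ℕ → ℂ) : Uf n y 1 = y 1 / y n := by
  unfold Uf
  rw [show Finset.Icc 2 1 = ∅ by rfl, Finset.sum_empty, add_zero]

/-- Key identity: `U_k(y(x)) · T_k(x) = x_n`. -/
lemma lemA {n : ℕ} (hn : 2 ≤ n) (x : ℕ → ℂ)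
    (hx : ∀ k, 2 ≤ k → k ≤ 2 * n - 1 → x k ≠ 0)
    (hT : ∀ k, 1 ≤ k → k ≤ n - 1 → Tf n x k ≠ 0) :
    ∀ k, 1 ≤ k → k ≤ n - 1 → Uf n (yOf n x) k * Tf n x k = x n := by
  intro k
  induction k with
  | zero => omega
  | succ k ih =>
    intro h1 h2
    rcases Nat.eq_zero_or_pos k with hk | hk
    · subst hk
      rw [Uf_one, yOf_one, yOf_n x hn]
      have hT1 := hT 1 le_rfl h2
      have hxn := hx n hn (by omega)
      field_simp
    · have hkle : k ≤ n - 1 := by omega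
      have hTk := hT k hk hkle
      have hTk1 := hT (k + 1) (by omega) h2
      have hxn := hx n hn (by omega)
      have hxnk := hx (n + k) (by omega) (by omega)
      have hxk1 := hx (k + 1) (by omega) (by omega)
      have hu : Uf n (yOf n x) k = x n / Tf n x k := (eq_div_iff hTk).mpr (ih hk hkle)
      have hrec : Tf n x k = x (k + 1) / x (n + k) + Tf n x (k + 1) :=
        Tf_succ x (by omega)
      rw [Uf_succ _ hk, yOf_mid x (by omega) h2, yOf_hi x hn (by omega),
        show n + k - n = k by omega, hu, hrec]
      rw [hrec] at hTk
      have hs : x (k + 1) + Tf n x (k + 1) * x (n + k) ≠ 0 := by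
        have h := mul_ne_zero hTk hxnk
        rwa [add_mul, div_mul_cancel₀ _ hxnk] at h
      have hs' : x (n + k) * Tf n x (k + 1) + x (k + 1) ≠ 0 := by
        rwa [add_comm, mul_comm] at hs
      field_simp
      ring_nf
      rw [add_comm 1 k, ← add_mul, mul_inv_cancel₀ hs']

/-- Key identity: `T_k(x(y)) · (y_n · U_k(y)) = 1`. -/
lemma lemB {n : ℕ} (hn : 2 ≤ n) (y : ℕ → ℂ)
    (hy : ∀ k, 1 ≤ k → k ≤ 2 * n - 2 → y k ≠ 0)
    (hU : ∀ k, 1 ≤ k → k ≤ n - 1 → Uf n y k ≠ 0) :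
    ∀ d k, k + d = n - 1 → 1 ≤ k → Tf n (xOf n y) k * (y n * Uf n y k) = 1 := by
  intro d
  induction d with
  | zero =>
    intro k hk h1
    have : k = n - 1 := by omega
    subst this
    rw [Tf_top _ hn, xOf_n y hn, xOf_top y hn]
    have hyn := hy n (by omega) (by omega)
    have hU1 := hU (n - 1) h1 le_rfl
    field_simp
  | succ d ih =>
    intro k hk h1
    have hUk := hU k h1 (by omega)
    have hUk1 := hU (k + 1) (by omega) (by omega)
    have hyn := hy n (by omega) (by omega)
    have hyk1 := hy (k + 1) (by omega) (by omega)
    have hynk := hy (n + k) (by omega) (by omega)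
    have ht : Tf n (xOf n y) (k + 1) = (y n * Uf n y (k + 1))⁻¹ :=
      eq_inv_of_mul_eq_one_left (ih (k + 1) (by omega) (by omega))
    have hrec : Tf n (xOf n y) k
        = xOf n y (k + 1) / xOf n y (n + k) + Tf n (xOf n y) (k + 1) :=
      Tf_succ _ (by omega)
    have hUrec : Uf n y (k + 1) = Uf n y k + y (k + 1) / y (n + k) := Uf_succ y h1
    rw [hrec, xOf_lo y (by omega), xOf_hi y hn (by omega) (by omega),
      show n + k - n = k by omega, ht, hUrec]
    rw [hUrec] at hUk1
    have hs : Uf n y k * y (n + k) + y (k + 1) ≠ 0 := by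
      have h := mul_ne_zero hUk1 hynk
      rwa [add_mul, div_mul_cancel₀ _ hynk] at h
    field_simp
    ring

/-- `x ↦ y(x)` and `y ↦ x(y)` are mutually inverse birational maps. -/
theorem stmt2 (n : ℕ) (hn : 2 ≤ n) :
    (∀ x : ℕ → ℂ, (∀ k, 2 ≤ k → k ≤ 2 * n - 1 → x k ≠ 0) →
      (∀ k, 1 ≤ k → k ≤ n - 1 → Tf n x k ≠ 0) →
      (∀ k, 1 ≤ k → k ≤ n - 1 → Uf n (yOf n x) k ≠ 0) →
      ∀ k, 2 ≤ k → k ≤ 2 * n - 1 → xOf n (yOf n x) k = x k) ∧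
    (∀ y : ℕ → ℂ, (∀ k, 1 ≤ k → k ≤ 2 * n - 2 → y k ≠ 0) →
      (∀ k, 1 ≤ k → k ≤ n - 1 → Uf n y k ≠ 0) →
      (∀ k, 1 ≤ k → k ≤ n - 1 → Tf n (xOf n y) k ≠ 0) →
      ∀ k, 1 ≤ k → k ≤ 2 * n - 2 → yOf n (xOf n y) k = y k) := by
  constructor
  · intro x hx hT hU k hk1 hk2
    have hA := lemA hn x hx hT
    have hxn := hx n hn (by omega)
    rcases le_or_gt k (n - 1) with h | h
    · have hTk := hT k (by omega) h
      have hu : Uf n (yOf n x) k = x n / Tf n x k :=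
        (eq_div_iff hTk).mpr (hA k (by omega) h)
      rw [xOf_lo _ h, yOf_mid x hk1 h, yOf_n x hn, hu]
      field_simp
    · rcases eq_or_lt_of_le (show n ≤ k by omega) with h' | h'
      · rw [← h', xOf_n _ hn, yOf_n x hn, inv_inv]
      · rcases eq_or_lt_of_le (show k ≤ 2 * n - 1 by omega) with h'' | h''
        · have hTk := hT (n - 1) (by omega) le_rfl
          have hu : Uf n (yOf n x) (n - 1) = x n / Tf n x (n - 1) :=
            (eq_div_iff hTk).mpr (hA (n - 1) (by omega) le_rfl)
          rw [h'', xOf_top _ hn, hu, Tf_top x hn]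
          have h2n := hx (2 * n - 1) (by omega) (by omega)
          field_simp
        · have hTk := hT (k - n) (by omega) (by omega)
          have hu : Uf n (yOf n x) (k - n) = x n / Tf n x (k - n) :=
            (eq_div_iff hTk).mpr (hA (k - n) (by omega) (by omega))
          rw [xOf_hi _ hn (by omega) (by omega), yOf_hi x hn (by omega), hu]
          field_simp
  · intro y hy hU hT k hk1 hk2
    have hB := lemB hn y hy hU
    have hyn := hy n (by omega) (by omega)
    rcases eq_or_lt_of_le hk1 with h | h
    · have ht : Tf n (xOf n y) 1 = (y n * Uf n y 1)⁻¹ :=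
        eq_inv_of_mul_eq_one_left (hB (n - 2) 1 (by omega) le_rfl)
      rw [← h, yOf_one, ht, inv_inv, Uf_one]
      field_simp
    · rcases le_or_gt k (n - 1) with h' | h'
      · have ht : Tf n (xOf n y) k = (y n * Uf n y k)⁻¹ :=
          eq_inv_of_mul_eq_one_left (hB (n - 1 - k) k (by omega) (by omega))
        have hUk := hU k (by omega) h'
        rw [yOf_mid _ h h', xOf_lo y h', ht, inv_inv]
        field_simp
      · rcases eq_or_lt_of_le (show n ≤ k by omega) with h'' | h''
        · rw [← h'', yOf_n _ hn, xOf_n y hn, inv_inv]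
        · have ht : Tf n (xOf n y) (k - n) = (y n * Uf n y (k - n))⁻¹ :=
            eq_inv_of_mul_eq_one_left (hB (n - 1 - (k - n)) (k - n) (by omega) (by omega))
          have hUk := hU (k - n) (by omega) (by omega)
          rw [yOf_hi _ hn (by omega), xOf_hi y hn (by omega) hk2, xOf_n y hn, ht]
          field_simp
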